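/- Let U ⊆ ℝ^n be open, let I ⊆ {1,…,n}, let i, j ∈ I be distinct, and let m be a positive integer. Set C = {x ∈ U : x_l = 0 for all l ∈ I}, let π_i = π_{I,i} be the i-th standard blowup chart and U_i = π_i^{-1}(U). Let f : U → ℝ be real-analytic with ord(f;x) = m for all x ∈ C, and suppose ∂^{m−1} f/∂x_j^{m−1}(x) = 0 for every x ∈ U with x_j = 0. Let g : U_i → ℝ be a real-analytic function with f(π_i(y)) = y_i^m · g(y) for all y ∈ U_i. Then ∂^{m−1} g/∂y_j^{m−1}(y) = 0 for every y ∈ U_i with y_j = 0. -/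

import Mathlib

/-- Partial derivative in the `i`-th coordinate. -/
noncomputable def pd {n : ℕ} (i : Fin n) (f : (Fin n → ℝ) → ℝ) : (Fin n → ℝ) → ℝ :=
  fun x => fderiv ℝ f x (Pi.single i 1)

/-- Iterated partial derivative `∂^α` for a multi-index `α : Fin n → ℕ`. -/
noncomputable def md {n : ℕ} (α : Fin n → ℕ) (f : (Fin n → ℝ) → ℝ) : (Fin n → ℝ) → ℝ :=
  (List.finRange n).foldr (fun i g => (pd i)^[α i] g) f

/-- The order of `f` at `a`: `ord(f;a) = inf{|α| : ∂^α f(a) ≠ 0} ∈ ℕ ∪ {∞}`. -/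
noncomputable def ordAt {n : ℕ} (f : (Fin n → ℝ) → ℝ) (a : Fin n → ℝ) : ℕ∞ :=
  sInf {k : ℕ∞ | ∃ α : Fin n → ℕ, md α f a ≠ 0 ∧ ((∑ j, α j : ℕ) : ℕ∞) = k}

/-- The `i`-th standard chart of the blowing-up of `ℝⁿ` with center `{x : x_I = 0}`. -/
def blowChart {n : ℕ} (I : Finset (Fin n)) (i : Fin n) (y : Fin n → ℝ) : Fin n → ℝ :=
  fun j => if j ∈ I ∧ j ≠ i then y i * y j else y j

section auxx
variable {n : ℕ}

lemma pd_analyticOnNhd (j : Fin n) {h : (Fin n → ℝ) → ℝ} {s : Set (Fin n → ℝ)}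
    (hh : AnalyticOnNhd ℝ h s) : AnalyticOnNhd ℝ (pd j h) s := by
  intro x hx
  have h1 : AnalyticAt ℝ (fderiv ℝ h) x := hh.fderiv x hx
  have h2 := ((ContinuousLinearMap.apply ℝ ℝ (Pi.single j 1 : Fin n → ℝ)).analyticAt
      (fderiv ℝ h x)).comp h1
  exact h2

lemma pd_iter_analyticOnNhd (j : Fin n) (k : ℕ) {h : (Fin n → ℝ) → ℝ} {s : Set (Fin n → ℝ)}
    (hh : AnalyticOnNhd ℝ h s) : AnalyticOnNhd ℝ ((pd j)^[k] h) s := by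
  induction k with
  | zero => simpa using hh
  | succ k ih => rw [Function.iterate_succ_apply']; exact pd_analyticOnNhd j ih

lemma pd_congr (j : Fin n) {s : Set (Fin n → ℝ)} (hs : IsOpen s) {f₁ f₂ : (Fin n → ℝ) → ℝ}
    (h : Set.EqOn f₁ f₂ s) : Set.EqOn (pd j f₁) (pd j f₂) s := by
  intro x hx
  have he : f₁ =ᶠ[nhds x] f₂ := Filter.eventuallyEq_of_mem (hs.mem_nhds hx) h
  simp only [pd, he.fderiv_eq]

lemma pd_iter_congr (j : Fin n) (k : ℕ) {s : Set (Fin n → ℝ)} (hs : IsOpen s)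
    {f₁ f₂ : (Fin n → ℝ) → ℝ} (h : Set.EqOn f₁ f₂ s) :
    Set.EqOn ((pd j)^[k] f₁) ((pd j)^[k] f₂) s := by
  induction k with
  | zero => simpa using h
  | succ k ih => simp only [Function.iterate_succ_apply']; exact pd_congr j hs ih

lemma pd_pow_mul {i j : Fin n} (hij : i ≠ j) (p : ℕ) {h : (Fin n → ℝ) → ℝ}
    {y : Fin n → ℝ} (hh : DifferentiableAt ℝ h y) :
    pd j (fun y => y i ^ p * h y) y = y i ^ p * pd j h y := by
  have h1 : HasFDerivAt (fun y : Fin n → ℝ => y i)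
      ((ContinuousLinearMap.proj i : (Fin n → ℝ) →L[ℝ] ℝ)) y := hasFDerivAt_apply i y
  have hc : DifferentiableAt ℝ (fun y : Fin n → ℝ => y i ^ p) y :=
    h1.differentiableAt.pow p
  have hz : fderiv ℝ (fun y : Fin n → ℝ => y i ^ p) y (Pi.single j 1) = 0 := by
    have h2 : fderiv ℝ (fun y : Fin n → ℝ => y i ^ p) y
        = (fderiv ℝ (fun t : ℝ => t ^ p) (y i)).comp
          (ContinuousLinearMap.proj i) := by
      rw [← h1.fderiv]
      exact fderiv_comp y (differentiable_pow p).differentiableAt h1.differentiableAt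
    rw [h2]
    simp [Pi.single_eq_of_ne hij]
  unfold pd
  rw [fderiv_fun_mul hc hh]
  simp [hz, pd]

/-- The derivative of the blowup chart. -/
noncomputable def bD (I : Finset (Fin n)) (i : Fin n) (y : Fin n → ℝ) :
    (Fin n → ℝ) →L[ℝ] (Fin n → ℝ) :=
  ContinuousLinearMap.pi (fun l => if l ∈ I ∧ l ≠ i then
    y i • ContinuousLinearMap.proj l + y l • ContinuousLinearMap.proj i
    else ContinuousLinearMap.proj l)

lemma hasFDerivAt_blowChart (I : Finset (Fin n)) (i : Fin n) (y : Fin n → ℝ) :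
    HasFDerivAt (blowChart I i) (bD I i y) y := by
  apply hasFDerivAt_pi''
  intro l
  have hp : (ContinuousLinearMap.proj l).comp (bD I i y)
      = if l ∈ I ∧ l ≠ i then
          y i • ContinuousLinearMap.proj l + y l • ContinuousLinearMap.proj i
        else ContinuousLinearMap.proj l := ContinuousLinearMap.proj_pi _ _
  rw [hp]
  show HasFDerivAt (fun x : Fin n → ℝ => if l ∈ I ∧ l ≠ i then x i * x l else x l) _ y
  by_cases hl : l ∈ I ∧ l ≠ i
  · simp only [if_pos hl]
    exact (hasFDerivAt_apply i y).mul (hasFDerivAt_apply l y)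
  · simp only [if_neg hl]
    exact hasFDerivAt_apply l y

lemma bD_single {I : Finset (Fin n)} {i j : Fin n} (hij : i ≠ j) (hj : j ∈ I)
    (y : Fin n → ℝ) : bD I i y (Pi.single j 1) = y i • (Pi.single j 1 : Fin n → ℝ) := by
  funext l
  simp only [bD, ContinuousLinearMap.pi_apply]
  by_cases hl : l ∈ I ∧ l ≠ i
  · rw [if_pos hl]
    simp [Pi.single_eq_of_ne hij]
  · rw [if_neg hl]
    have hlj : l ≠ j := by rintro rfl; exact hl ⟨hj, hij.symm⟩
    simp [Pi.single_eq_of_ne hlj]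

lemma pd_comp_blowChart {I : Finset (Fin n)} {i j : Fin n} (hij : i ≠ j) (hj : j ∈ I)
    {h : (Fin n → ℝ) → ℝ} {y : Fin n → ℝ}
    (hh : DifferentiableAt ℝ h (blowChart I i y)) :
    pd j (fun y => h (blowChart I i y)) y = y i * pd j h (blowChart I i y) := by
  have hπ := hasFDerivAt_blowChart I i y
  have hcomp : HasFDerivAt (fun y => h (blowChart I i y))
      ((fderiv ℝ h (blowChart I i y)).comp (bD I i y)) y :=
    hh.hasFDerivAt.comp y hπ
  show fderiv ℝ (fun y => h (blowChart I i y)) y (Pi.single j 1) = _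
  rw [hcomp.fderiv]
  simp only [ContinuousLinearMap.coe_comp', Function.comp_apply]
  rw [bD_single hij hj, map_smul]
  rfl

end auxx

theorem stmt7 {n : ℕ} (U : Set (Fin n → ℝ)) (hU : IsOpen U)
    (I : Finset (Fin n)) (i j : Fin n) (hi : i ∈ I) (hj : j ∈ I) (hij : i ≠ j)
    (m : ℕ) (hm : 0 < m)
    (f : (Fin n → ℝ) → ℝ) (hf : ∀ x ∈ U, AnalyticAt ℝ f x)
    (hord : ∀ x ∈ U, (∀ l ∈ I, x l = 0) → ordAt f x = (m : ℕ∞))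
    (hvan : ∀ x ∈ U, x j = 0 → (pd j)^[m - 1] f x = 0)
    (g : (Fin n → ℝ) → ℝ)
    (hganal : ∀ y : Fin n → ℝ, blowChart I i y ∈ U → AnalyticAt ℝ g y)
    (hfg : ∀ y : Fin n → ℝ, blowChart I i y ∈ U → f (blowChart I i y) = y i ^ m * g y) :
    ∀ y : Fin n → ℝ, blowChart I i y ∈ U → y j = 0 → (pd j)^[m - 1] g y = 0 := by
  classical
  set V : Set (Fin n → ℝ) := blowChart I i ⁻¹' U with hVdef
  have hπcont : Continuous (blowChart I i) := continuous_iff_continuousAt.2 fun y =>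
    (hasFDerivAt_blowChart I i y).differentiableAt.continuousAt
  have hV : IsOpen V := hU.preimage hπcont
  have hgA : AnalyticOnNhd ℝ g V := fun y hy => hganal y hy
  have hfA : AnalyticOnNhd ℝ f U := fun x hx => hf x hx
  have hπj : ∀ y : Fin n → ℝ, blowChart I i y j = y i * y j := by
    intro y
    simp only [blowChart]
    rw [if_pos ⟨hj, hij.symm⟩]
  -- Key computation A : derivatives of y ↦ y_i^m * g y
  have keyA : ∀ k : ℕ, Set.EqOn ((pd j)^[k] (fun y => y i ^ m * g y))
      (fun y => y i ^ m * (pd j)^[k] g y) V := by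
    intro k
    induction k with
    | zero => intro y hy; simp
    | succ k ih =>
      intro y hy
      rw [Function.iterate_succ_apply']
      rw [pd_congr j hV ih hy]
      have hdg : DifferentiableAt ℝ ((pd j)^[k] g) y :=
        ((pd_iter_analyticOnNhd j k hgA) y hy).differentiableAt
      rw [pd_pow_mul hij m hdg]
      show _ = y i ^ m * (pd j)^[k + 1] g y
      rw [Function.iterate_succ_apply']
  -- Key computation B : derivatives of f ∘ π
  have keyB : ∀ k : ℕ, Set.EqOn ((pd j)^[k] (fun y => f (blowChart I i y)))
      (fun y => y i ^ k * (pd j)^[k] f (blowChart I i y)) V := by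
    intro k
    induction k with
    | zero => intro y hy; simp
    | succ k ih =>
      intro y hy
      rw [Function.iterate_succ_apply']
      rw [pd_congr j hV ih hy]
      have hdf : DifferentiableAt ℝ ((pd j)^[k] f) (blowChart I i y) :=
        ((pd_iter_analyticOnNhd j k hfA) (blowChart I i y) hy).differentiableAt
      have hdfc : DifferentiableAt ℝ (fun y => (pd j)^[k] f (blowChart I i y)) y :=
        hdf.comp y (hasFDerivAt_blowChart I i y).differentiableAt
      rw [pd_pow_mul hij k hdfc, pd_comp_blowChart hij hj hdf]
      show _ = y i ^ (k + 1) * (pd j)^[k + 1] f (blowChart I i y)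
      rw [Function.iterate_succ_apply']
      ring
  have hEq : Set.EqOn (fun y => f (blowChart I i y)) (fun y => y i ^ m * g y) V :=
    fun y hy => hfg y hy
  -- The main identity on V
  have main : ∀ z ∈ V, z i ^ m * (pd j)^[m - 1] g z
      = z i ^ (m - 1) * (pd j)^[m - 1] f (blowChart I i z) := by
    intro z hz
    have hA := keyA (m - 1) hz
    have hB := keyB (m - 1) hz
    have hC := pd_iter_congr j (m - 1) hV hEq hz
    simp only at hA hB
    rw [← hA, ← hC, hB]
  -- vanishing at points with z i ≠ 0
  have main0 : ∀ z ∈ V, z j = 0 → z i ≠ 0 → (pd j)^[m - 1] g z = 0 := by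
    intro z hz hzj hzi
    have e2 : (pd j)^[m - 1] f (blowChart I i z) = 0 := by
      apply hvan _ hz
      rw [hπj z, hzj, mul_zero]
    have e1 := main z hz
    rw [e2, mul_zero] at e1
    rcases mul_eq_zero.1 e1 with h | h
    · exact absurd h (pow_ne_zero m hzi)
    · exact h
  -- conclusion, including z i = 0 by continuity
  intro y hy hyj
  by_cases hyi : y i ≠ 0
  · exact main0 y hy hyj hyi
  push_neg at hyi
  set h : (Fin n → ℝ) → ℝ := (pd j)^[m - 1] g with hhdef
  have hcont : ContinuousAt h y :=
    ((pd_iter_analyticOnNhd j (m - 1) hgA) y hy).continuousAt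
  set F : ℝ → (Fin n → ℝ) := fun t => Function.update y i t with hFdef
  have hFc : Continuous F := continuous_const.update i continuous_id
  have hF0 : F 0 = y := by
    rw [hFdef]
    simp only
    rw [← hyi]
    exact Function.update_eq_self i y
  have htend : Filter.Tendsto F (nhdsWithin 0 {(0 : ℝ)}ᶜ) (nhds y) := by
    have h1 := hFc.tendsto 0
    rw [hF0] at h1
    exact h1.mono_left nhdsWithin_le_nhds
  have hev : ∀ᶠ t in nhdsWithin 0 {(0 : ℝ)}ᶜ, h (F t) = 0 := by
    have hmem : ∀ᶠ t in nhdsWithin 0 {(0 : ℝ)}ᶜ, F t ∈ V :=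
      htend.eventually (hV.mem_nhds hy)
    filter_upwards [hmem, self_mem_nhdsWithin] with t htV ht0
    refine main0 (F t) htV ?_ ?_
    · rw [hFdef]
      simp only
      rw [Function.update_of_ne hij.symm, hyj]
    · rw [hFdef]
      simp only
      rw [Function.update_self]
      exact ht0
  have h1 : Filter.Tendsto (fun t => h (F t)) (nhdsWithin 0 {(0 : ℝ)}ᶜ) (nhds (h y)) :=
    hcont.tendsto.comp htend
  have h2 : Filter.Tendsto (fun t => h (F t)) (nhdsWithin 0 {(0 : ℝ)}ᶜ) (nhds 0) :=
    Filter.Tendsto.congr' (by filter_upwards [hev] with t ht; exact ht.symm)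
      tendsto_const_nhds
  exact tendsto_nhds_unique h1 h2
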